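/- For every S-torsion-free R-module A, the S-completion Λ_S(A) is S-complete; in fact, Λ_S(A) is an S-pure submodule of the product Π_A = ∏_{s∈S} A/sA, i.e., Λ_S(A) ∩ s·Π_A = s·Λ_S(A) for all s ∈ S. -/
import Mathlib


open Submodule

/-- The submodule `s·A` of an `R`-module `A`. -/
def smulTop (R : Type) [CommRing R] (s : R)
    (A : Type) [AddCommGroup A] [Module R A] : Submodule R A :=
  Ideal.span {s} • (⊤ : Submodule R A)

/-- The natural projection `A/tA → A/sA` when `s ∣ t`. -/
def transMap (R : Type) [CommRing R]
    (A : Type) [AddCommGroup A] [Module R A] (s t : R) (h : s ∣ t) :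
    (A ⧸ smulTop R t A) →ₗ[R] A ⧸ smulTop R s A :=
  Submodule.mapQ _ _ LinearMap.id (by
    rw [Submodule.comap_id]
    exact Submodule.smul_mono (Ideal.span_singleton_le_span_singleton.mpr h) le_rfl)

/-- The S-completion `Λ_S(A) = lim_{s ∈ S} A/sA`, realized as the submodule of compatible
families in `∏_{s ∈ S} A/sA`. -/
def sCompletion (R : Type) [CommRing R] (S : Submonoid R)
    (A : Type) [AddCommGroup A] [Module R A] :
    Submodule R (∀ s : S, A ⧸ smulTop R (s : R) A) where
  carrier := {x | ∀ (s t : S) (h : (s : R) ∣ (t : R)), transMap R A s t h (x t) = x s}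
  add_mem' := by
    intro x y hx hy s t h
    rw [Pi.add_apply, Pi.add_apply, map_add, hx s t h, hy s t h]
  zero_mem' := by
    intro s t h
    rw [Pi.zero_apply, Pi.zero_apply, map_zero]
  smul_mem' := by
    intro r x hx s t h
    rw [Pi.smul_apply, Pi.smul_apply, map_smul, hx s t h]

theorem mem_sCompletion (R : Type) [CommRing R] (S : Submonoid R)
    (A : Type) [AddCommGroup A] [Module R A]
    (x : ∀ s : S, A ⧸ smulTop R (s : R) A) :
    x ∈ sCompletion R S A ↔
      ∀ (s t : S) (h : (s : R) ∣ (t : R)), transMap R A s t h (x t) = x s :=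
  Iff.rfl

/-- The natural map `λ_{S,A} : A → Λ_S(A)`. -/
def lamMap (R : Type) [CommRing R] (S : Submonoid R)
    (A : Type) [AddCommGroup A] [Module R A] :
    A →ₗ[R] sCompletion R S A :=
  LinearMap.codRestrict (sCompletion R S A)
    (LinearMap.pi fun s : S => (smulTop R (s : R) A).mkQ)
    (by
      intro a s t h
      show transMap R A s t h ((smulTop R (t : R) A).mkQ a) = (smulTop R (s : R) A).mkQ a
      simp only [transMap, Submodule.mkQ_apply, Submodule.mapQ_apply, LinearMap.id_apply])

lemma mem_smulTop {R : Type} [CommRing R] {s : R}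
    {A : Type} [AddCommGroup A] [Module R A] (x : A) :
    x ∈ smulTop R s A ↔ ∃ a : A, s • a = x := by
  rw [smulTop, Submodule.ideal_span_singleton_smul, ← SetLike.mem_coe,
    Submodule.coe_pointwise_smul, Set.mem_smul_set]
  simp

lemma transMap_mkQ {R : Type} [CommRing R]
    {A : Type} [AddCommGroup A] [Module R A] (s t : R) (h : s ∣ t) (a : A) :
    transMap R A s t h ((smulTop R t A).mkQ a) = (smulTop R s A).mkQ a := by
  simp only [transMap, Submodule.mkQ_apply, Submodule.mapQ_apply, LinearMap.id_apply]

lemma smul_mk_self {R : Type} [CommRing R] {s : R}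
    {A : Type} [AddCommGroup A] [Module R A] (q : A ⧸ smulTop R s A) : s • q = 0 := by
  obtain ⟨a, rfl⟩ := (smulTop R s A).mkQ_surjective q
  rw [← map_smul, Submodule.mkQ_apply, Submodule.Quotient.mk_eq_zero]
  exact (mem_smulTop _).mpr ⟨a, rfl⟩

lemma key_cancel {R : Type} [CommRing R] {A : Type} [AddCommGroup A] [Module R A]
    (s t : R) (hs : ∀ x : A, s • x = 0 → x = 0) (a b : A)
    (h : (smulTop R (s * t) A).mkQ (s • a) = (smulTop R (s * t) A).mkQ (s • b)) :
    (smulTop R t A).mkQ a = (smulTop R t A).mkQ b := by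
  rw [Submodule.mkQ_apply, Submodule.mkQ_apply, Submodule.Quotient.eq] at h ⊢
  obtain ⟨c, hc⟩ := (mem_smulTop _).mp h
  refine (mem_smulTop _).mpr ⟨c, ?_⟩
  have h0 : s • (t • c - (a - b)) = 0 := by
    rw [smul_sub, smul_smul, hc, smul_sub]
    abel
  exact sub_eq_zero.mp (hs _ h0)

lemma sCompletion_pure (R : Type) [CommRing R] (S : Submonoid R)
    (A : Type) [AddCommGroup A] [Module R A]
    (htf : ∀ (s : S) (x : A), (s : R) • x = 0 → x = 0) (s : S) :
    sCompletion R S A ⊓ smulTop R (s : R) (∀ t : S, A ⧸ smulTop R (t : R) A)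
      = Ideal.span {(s : R)} • sCompletion R S A := by
  apply le_antisymm
  · rintro x ⟨hxΛ, hxs⟩
    obtain ⟨y, hy⟩ := (mem_smulTop x).mp hxs
    have hlift : ∀ t : S, ∃ a : A,
        (smulTop R ((s * t : S) : R) A).mkQ ((s : R) • a) = x (s * t) := by
      intro t
      obtain ⟨a, ha⟩ := (smulTop R ((s * t : S) : R) A).mkQ_surjective (y (s * t))
      exact ⟨a, by rw [map_smul, ha, ← hy]; rfl⟩
    choose a ha using hlift
    have hd1 : ∀ t : S, (t : R) ∣ ((s * t : S) : R) := fun t => ⟨(s : R), by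
      rw [Submonoid.coe_mul]; ring⟩
    have hd2 : ∀ t : S, (s : R) ∣ ((s * t : S) : R) := fun t => ⟨(t : R), by
      rw [Submonoid.coe_mul]⟩
    set z : ∀ t : S, A ⧸ smulTop R (t : R) A := fun t => (smulTop R (t : R) A).mkQ (a t)
      with hz_def
    have hz : z ∈ sCompletion R S A := by
      intro t t' h
      show transMap R A t t' h ((smulTop R (t' : R) A).mkQ (a t'))
        = (smulTop R (t : R) A).mkQ (a t)
      rw [transMap_mkQ]
      apply key_cancel (s : R) (t : R) (htf s)
      have hdd : ((s * t : S) : R) ∣ ((s * t' : S) : R) := by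
        rw [Submonoid.coe_mul, Submonoid.coe_mul]
        exact mul_dvd_mul_left _ h
      have h1 := hxΛ (s * t) (s * t') hdd
      show (smulTop R ((s*t : S) : R) A).mkQ ((s:R) • a t')
        = (smulTop R ((s*t : S) : R) A).mkQ ((s:R) • a t)
      rw [ha t, ← h1, ← ha t', transMap_mkQ]
    have hsz : (s : R) • z = x := by
      funext t
      have h1 := hxΛ t (s * t) (hd1 t)
      rw [← h1, ← ha t, transMap_mkQ]
      show (s : R) • (smulTop R (t : R) A).mkQ (a t) = _
      rw [← map_smul]
    exact hsz ▸ Submodule.smul_mem_smul (Ideal.mem_span_singleton_self _) hz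
  · refine le_inf Submodule.smul_le_right ?_
    rw [smulTop]
    exact Submodule.smul_mono le_rfl le_top

lemma sCompletion_surjective (R : Type) [CommRing R] (S : Submonoid R)
    (A : Type) [AddCommGroup A] [Module R A]
    (htf : ∀ (s : S) (x : A), (s : R) • x = 0 → x = 0) :
    Function.Surjective (lamMap R S (sCompletion R S A)) := by
  intro ξ
  choose x hx using fun s : S =>
    (smulTop R (s : R) (sCompletion R S A)).mkQ_surjective (ξ.1 s)
  have hcompat : ∀ (s t : S), (s : R) ∣ (t : R) →
      ∃ w : sCompletion R S A, (s : R) • w = x t - x s := by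
    intro s t h
    have h1 := ξ.2 s t h
    rw [← hx s, ← hx t, transMap_mkQ, Submodule.mkQ_apply, Submodule.mkQ_apply,
      Submodule.Quotient.eq] at h1
    exact (mem_smulTop _).mp h1
  have hcomp_eq : ∀ (s t : S), (s : R) ∣ (t : R) → ((x t).1 s = (x s).1 s) := by
    intro s t h
    obtain ⟨w, hw⟩ := hcompat s t h
    have h2 := congrArg (fun v : sCompletion R S A => v.1 s) hw
    simp only [Submodule.coe_smul, Submodule.coe_sub, Pi.smul_apply, Pi.sub_apply] at h2
    rw [smul_mk_self] at h2
    exact sub_eq_zero.mp h2.symm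
  have hu : (fun s : S => (x s).1 s) ∈ sCompletion R S A := by
    intro s t h
    show transMap R A s t h ((x t).1 t) = (x s).1 s
    rw [(x t).2 s t h]
    exact hcomp_eq s t h
  refine ⟨⟨fun s : S => (x s).1 s, hu⟩, ?_⟩
  apply Subtype.ext
  funext s
  show (smulTop R (s : R) (sCompletion R S A)).mkQ ⟨fun s : S => (x s).1 s, hu⟩ = ξ.1 s
  rw [← hx s, Submodule.mkQ_apply, Submodule.mkQ_apply, Submodule.Quotient.eq, mem_smulTop]
  have hmem : ((⟨fun s : S => (x s).1 s, hu⟩ - x s : sCompletion R S A) : Subtype _).1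
      ∈ sCompletion R S A ⊓ smulTop R (s : R) (∀ t : S, A ⧸ smulTop R (t : R) A) := by
    refine Submodule.mem_inf.mpr ⟨(Submodule.sub_mem _ hu (x s).2 : _), ?_⟩
    rw [mem_smulTop]
    have hcomp : ∀ t : S, ∃ c : A ⧸ smulTop R (t : R) A,
        (s : R) • c = (x t).1 t - (x s).1 t := by
      intro t
      have hdt : (t : R) ∣ ((s * t : S) : R) := ⟨(s : R), by rw [Submonoid.coe_mul]; ring⟩
      have hds : (s : R) ∣ ((s * t : S) : R) := ⟨(t : R), by rw [Submonoid.coe_mul]⟩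
      obtain ⟨w2, hw2⟩ := hcompat s (s * t) hds
      refine ⟨w2.1 t, ?_⟩
      have h2 := congrArg (fun v : sCompletion R S A => v.1 t) hw2
      simp only [Submodule.coe_smul, Submodule.coe_sub, Pi.smul_apply, Pi.sub_apply] at h2
      have h3 : (x (s * t)).1 t = (x t).1 t := hcomp_eq t (s * t) hdt
      rw [h2, h3]
    choose c hc using hcomp
    refine ⟨c, funext fun t => ?_⟩
    rw [Pi.smul_apply, hc t]
    rfl
  rw [sCompletion_pure R S A htf s, Submodule.ideal_span_singleton_smul, ← SetLike.mem_coe,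
    Submodule.coe_pointwise_smul, Set.mem_smul_set] at hmem
  obtain ⟨v, hvΛ, hv⟩ := hmem
  exact ⟨⟨v, hvΛ⟩, Subtype.ext (by simpa using hv)⟩

/-- For every S-torsion-free `R`-module `A`, the S-completion `Λ_S(A)` is S-complete;
in fact `Λ_S(A)` is an S-pure submodule of `Π_A = ∏_{s ∈ S} A/sA`:
`Λ_S(A) ∩ s·Π_A = s·Λ_S(A)` for all `s ∈ S`. -/
theorem sCompletion_complete_of_torsionFree
    (R : Type) [CommRing R] (S : Submonoid R)
    (A : Type) [AddCommGroup A] [Module R A]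
    (htf : ∀ (s : S) (x : A), (s : R) • x = 0 → x = 0) :
    Function.Surjective (lamMap R S (sCompletion R S A)) ∧
    ∀ s : S,
      sCompletion R S A ⊓ smulTop R (s : R) (∀ t : S, A ⧸ smulTop R (t : R) A)
        = Ideal.span {(s : R)} • sCompletion R S A :=
  ⟨sCompletion_surjective R S A htf, sCompletion_pure R S A htf⟩
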